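/- arXiv:1001.3790 — 4 statements merged into one kernel-verified Lean document; each statement's English description precedes it below -/
import Mathlib

section
/- The R-transform is an increasing function: the map R(w) = m⁻¹(−w) − 1/w is monotone increasing on its domain {w : −w ∈ m((−∞, A))} (a subset of the negative reals). If moreover the probability measure μ is not a single mass point (μ ≠ δ_{x₀} for every x₀ ∈ ℝ), then R is strictly increasing on this domain. -/
open MeasureTheory

lemma integral_pos_of_ae_pos {μ : Measure ℝ} [IsProbabilityMeasure μ] {h : ℝ → ℝ}
    (hpos : ∀ᵐ x ∂μ, 0 < h x) (hi : Integrable h μ) : 0 < ∫ x, h x ∂μ := by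
  rw [integral_pos_iff_support_of_nonneg_ae (hpos.mono fun x hx => hx.le) hi]
  have h1 : μ (Function.support h)ᶜ = 0 := by
    refine measure_mono_null ?_ (ae_iff.mp hpos)
    intro x hx
    simp only [Set.mem_compl_iff, Function.mem_support, not_not] at hx
    simp [hx]
  by_contra h2
  push_neg at h2
  have h3 : μ Set.univ = 0 := by
    have := measure_union_le (μ := μ) (Function.support h) (Function.support h)ᶜ
    simp only [Set.union_compl_self, h1, le_antisymm h2 zero_le] at this
    simpa using this
  simp [measure_univ] at h3

lemma eq_dirac_of_ae_eq {μ : Measure ℝ} [IsProbabilityMeasure μ] {x₀ : ℝ}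
    (h : ∀ᵐ x ∂μ, x = x₀) : μ = Measure.dirac x₀ := by
  ext s hs
  rw [Measure.dirac_apply' _ hs]
  by_cases hx : x₀ ∈ s
  · have hc : μ sᶜ = 0 := by
      refine measure_mono_null ?_ (ae_iff.mp h)
      intro x hxs hxe
      exact hxs (hxe ▸ hx)
    have h1 : μ s = 1 := (prob_compl_eq_zero_iff hs).mp hc
    simp [h1, Set.indicator_of_mem hx]
  · have : μ s = 0 := by
      refine measure_mono_null ?_ (ae_iff.mp h)
      intro x hxs hxe
      exact hx (hxe ▸ hxs)
    simp [this, Set.indicator_of_notMem hx]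


lemma cs_aux {ν : Measure ℝ} (u v : ℝ → ℝ)
    (hu2 : Integrable (fun x => u x ^ 2) ν)
    (hv2 : Integrable (fun x => v x ^ 2) ν)
    (huv : Integrable (fun x => u x * v x) ν)
    (hB : 0 < ∫ x, v x ^ 2 ∂ν) :
    (∫ x, u x * v x ∂ν) ^ 2 ≤ (∫ x, u x ^ 2 ∂ν) * (∫ x, v x ^ 2 ∂ν) ∧
      ((∫ x, u x * v x ∂ν) ^ 2 = (∫ x, u x ^ 2 ∂ν) * (∫ x, v x ^ 2 ∂ν) →
        ∀ᵐ x ∂ν, u x = ((∫ x, u x * v x ∂ν) / (∫ x, v x ^ 2 ∂ν)) * v x) := by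
  set Q := ∫ x, u x ^ 2 ∂ν with hQ
  set B := ∫ x, v x ^ 2 ∂ν with hBdef
  set I := ∫ x, u x * v x ∂ν with hI
  set t := I / B with ht
  have hBne : B ≠ 0 := ne_of_gt hB
  have hexp : ∀ x, (u x - t * v x) ^ 2
      = (u x ^ 2 - (2 * t) * (u x * v x)) + t ^ 2 * v x ^ 2 := by
    intro x; ring
  have h1 : Integrable (fun x => u x ^ 2 - 2 * t * (u x * v x)) ν := by
    exact hu2.sub (huv.const_mul (2 * t))
  have h2 : Integrable (fun x => t ^ 2 * v x ^ 2) ν := hv2.const_mul _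
  have hint : Integrable (fun x => (u x - t * v x) ^ 2) ν := by
    refine Integrable.congr ?_ (Filter.Eventually.of_forall fun x => (hexp x).symm)
    exact h1.add h2
  have hval : ∫ x, (u x - t * v x) ^ 2 ∂ν = Q - 2 * t * I + t ^ 2 * B := by
    rw [integral_congr_ae (Filter.Eventually.of_forall hexp)]
    rw [integral_add h1 h2, integral_sub hu2 (huv.const_mul _), integral_const_mul, integral_const_mul]
  have h0 : 0 ≤ ∫ x, (u x - t * v x) ^ 2 ∂ν := integral_nonneg fun x => sq_nonneg _
  have hval2 : ∫ x, (u x - t * v x) ^ 2 ∂ν = Q - I ^ 2 / B := by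
    rw [hval, ht]; field_simp; ring
  constructor
  · rw [hval2] at h0
    have : I ^ 2 / B ≤ Q := by linarith
    calc I ^ 2 = (I ^ 2 / B) * B := by field_simp
    _ ≤ Q * B := by exact mul_le_mul_of_nonneg_right this hB.le
  · intro heq
    have hz : ∫ x, (u x - t * v x) ^ 2 ∂ν = 0 := by
      rw [hval2]
      field_simp
      linarith [heq]
    have := (integral_eq_zero_iff_of_nonneg (fun x => sq_nonneg _) hint).mp hz
    filter_upwards [this] with x hx
    have : (u x - t * v x) ^ 2 = 0 := hx
    have := pow_eq_zero_iff (n := 2) (by norm_num) |>.mp this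
    linarith [sub_eq_zero.mp this]

section
variable {A : ℝ} {μ : Measure ℝ} [IsProbabilityMeasure μ]

lemma ae_le (hsupp : μ (Set.Iio A) = 0) : ∀ᵐ x ∂μ, A ≤ x := by
  rw [ae_iff]
  have : {x : ℝ | ¬ A ≤ x} = Set.Iio A := by ext x; simp [not_le]
  rw [this]; exact hsupp

lemma integrable_inv_sub (hsupp : μ (Set.Iio A) = 0) {s : ℝ} (hs : s < A) :
    Integrable (fun x => (x - s)⁻¹) μ := by
  refine Integrable.mono' (integrable_const (A - s)⁻¹)
    ((measurable_id.sub_const s).inv.aestronglyMeasurable) ?_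
  filter_upwards [ae_le hsupp] with x hx
  have h1 : 0 < x - s := by linarith
  rw [Real.norm_eq_abs, abs_of_pos (inv_pos.mpr h1)]
  exact inv_anti₀ (by linarith) (by linarith)

lemma m_pos (hsupp : μ (Set.Iio A) = 0) {s : ℝ} (hs : s < A) :
    0 < ∫ x, (x - s)⁻¹ ∂μ := by
  refine integral_pos_of_ae_pos ?_ (integrable_inv_sub hsupp hs)
  filter_upwards [ae_le hsupp] with x hx
  exact inv_pos.mpr (by linarith)

lemma m_mono (hsupp : μ (Set.Iio A) = 0) {s s' : ℝ} (hss : s ≤ s') (hs' : s' < A) :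
    (∫ x, (x - s)⁻¹ ∂μ) ≤ ∫ x, (x - s')⁻¹ ∂μ := by
  refine integral_mono_ae (integrable_inv_sub hsupp (lt_of_le_of_lt hss hs'))
    (integrable_inv_sub hsupp hs') ?_
  filter_upwards [ae_le hsupp] with x hx
  exact inv_anti₀ (by linarith) (by linarith)

end
set_option maxHeartbeats 1000000 in
lemma key_ineq (A : ℝ) (μ : Measure ℝ) [IsProbabilityMeasure μ]
    (hsupp : μ (Set.Iio A) = 0) {s₂ s₁ : ℝ} (h21 : s₂ < s₁) (h1A : s₁ < A) :
    ((s₁ - s₂) * ((∫ x, (x - s₁)⁻¹ ∂μ) * (∫ x, (x - s₂)⁻¹ ∂μ))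
        ≤ (∫ x, (x - s₁)⁻¹ ∂μ) - (∫ x, (x - s₂)⁻¹ ∂μ)) ∧
      ((∀ x₀ : ℝ, μ ≠ Measure.dirac x₀) →
        (s₁ - s₂) * ((∫ x, (x - s₁)⁻¹ ∂μ) * (∫ x, (x - s₂)⁻¹ ∂μ))
          < (∫ x, (x - s₁)⁻¹ ∂μ) - (∫ x, (x - s₂)⁻¹ ∂μ)) := by
  have h2A : s₂ < A := h21.trans h1A
  have hδ : (0:ℝ) < s₁ - s₂ := by linarith
  set δ := s₁ - s₂ with hδdef
  set f : ℝ → ℝ := fun x => (x - s₁)⁻¹ with hf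
  set g : ℝ → ℝ := fun x => (x - s₂)⁻¹ with hg
  set p : ℝ → ℝ := fun x => 1 - δ * g x with hp
  set u : ℝ → ℝ := fun x => Real.sqrt (f x * g x) with hu
  set v : ℝ → ℝ := fun x => Real.sqrt (p x) with hv
  have hA := ae_le hsupp
  have If : Integrable f μ := integrable_inv_sub hsupp h1A
  have Ig : Integrable g μ := integrable_inv_sub hsupp h2A
  have Ifg : Integrable (fun x => f x * g x) μ := by
    refine Integrable.mono' (integrable_const ((A - s₁)⁻¹ * (A - s₂)⁻¹))
      (((measurable_id.sub_const s₁).inv.mul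
        ((measurable_id.sub_const s₂).inv)).aestronglyMeasurable) ?_
    filter_upwards [hA] with x hx
    have h1 : 0 < x - s₁ := by linarith
    have h2 : 0 < x - s₂ := by linarith
    rw [Real.norm_eq_abs, abs_of_pos (mul_pos (inv_pos.mpr h1) (inv_pos.mpr h2))]
    exact mul_le_mul (inv_anti₀ (by linarith) (by linarith))
      (inv_anti₀ (by linarith) (by linarith)) (inv_pos.mpr h2).le
      (inv_pos.mpr (by linarith : (0:ℝ) < A - s₁)).le
  have Ip : Integrable p μ := (integrable_const 1).sub (Ig.const_mul δ)
  -- pointwise a.e. facts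
  have hpfacts : ∀ᵐ x ∂μ, 0 < f x ∧ 0 < g x ∧ p x = (x - s₁) / (x - s₂) ∧ 0 < p x := by
    filter_upwards [hA] with x hx
    have h1 : 0 < x - s₁ := by linarith
    have h2 : 0 < x - s₂ := by linarith
    refine ⟨inv_pos.mpr h1, inv_pos.mpr h2, ?_, ?_⟩
    · rw [hp, hg, hδdef]
      field_simp
      ring
    · rw [hp, hg]
      have : δ * (x - s₂)⁻¹ < 1 := by
        rw [mul_inv_lt_iff₀ h2]
        linarith
      linarith
  have he_u2 : (fun x => u x ^ 2) =ᵐ[μ] fun x => f x * g x := by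
    filter_upwards [hpfacts] with x ⟨h1, h2, _, _⟩
    exact Real.sq_sqrt (mul_nonneg h1.le h2.le)
  have he_v2 : (fun x => v x ^ 2) =ᵐ[μ] p := by
    filter_upwards [hpfacts] with x ⟨_, _, _, h4⟩
    exact Real.sq_sqrt h4.le
  have he_uv : (fun x => u x * v x) =ᵐ[μ] g := by
    filter_upwards [hA, hpfacts] with x hx ⟨h1, h2, h3, h4⟩
    have h5 : 0 < x - s₁ := by linarith
    have h6 : 0 < x - s₂ := by linarith
    rw [hu, hv]
    rw [← Real.sqrt_mul (mul_nonneg h1.le h2.le)]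
    have h7 : f x * g x * p x = g x ^ 2 := by
      rw [h3, hf, hg]
      field_simp
    rw [h7, Real.sqrt_sq h2.le]
  have hu2 : Integrable (fun x => u x ^ 2) μ := Ifg.congr he_u2.symm
  have hv2 : Integrable (fun x => v x ^ 2) μ := Ip.congr he_v2.symm
  have huv : Integrable (fun x => u x * v x) μ := Ig.congr he_uv.symm
  set m₁ := ∫ x, f x ∂μ with hm₁
  set m₂ := ∫ x, g x ∂μ with hm₂
  set J := ∫ x, f x * g x ∂μ with hJ
  have e1 : ∫ x, u x * v x ∂μ = m₂ := integral_congr_ae he_uv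
  have e2 : ∫ x, u x ^ 2 ∂μ = J := integral_congr_ae he_u2
  have e3 : ∫ x, v x ^ 2 ∂μ = 1 - δ * m₂ := by
    rw [integral_congr_ae he_v2, hp]
    rw [integral_sub (integrable_const 1) (Ig.const_mul δ), integral_const_mul]
    simp [hm₂]
  have hB : 0 < ∫ x, v x ^ 2 ∂μ := by
    rw [integral_congr_ae he_v2]
    refine integral_pos_of_ae_pos ?_ Ip
    filter_upwards [hpfacts] with x ⟨_, _, _, h4⟩
    exact h4
  have hm₂pos : 0 < m₂ := m_pos hsupp h2A
  have hdiffeq : m₁ - m₂ = δ * J := by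
    rw [hm₁, hm₂, hJ, ← integral_sub If Ig, ← integral_const_mul]
    refine integral_congr_ae ?_
    filter_upwards [hA] with x hx
    have h1 : 0 < x - s₁ := by linarith
    have h2 : 0 < x - s₂ := by linarith
    rw [hf, hg, hδdef]
    field_simp
    ring
  obtain ⟨hcs, heqcase⟩ := cs_aux u v hu2 hv2 huv hB
  rw [e1, e2, e3] at hcs heqcase
  constructor
  · nlinarith [mul_le_mul_of_nonneg_left hcs hδ.le]
  · intro hnd
    have hne : m₂ ^ 2 ≠ J * (1 - δ * m₂) := by
      intro heq
      have hconst := heqcase heq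
      set t := m₂ / (1 - δ * m₂) with ht
      have hdir : ∀ᵐ x ∂μ, x = s₁ + |t|⁻¹ := by
        filter_upwards [hA, hpfacts, hconst] with x hx ⟨h1, h2, h3, h4⟩ h5
        have hx1 : 0 < x - s₁ := by linarith
        have hsq : f x * g x = t ^ 2 * p x := by
          have := congrArg (· ^ 2) h5
          simp only [hu, hv] at this
          rw [Real.sq_sqrt (mul_nonneg h1.le h2.le)] at this
          rw [this, mul_pow, Real.sq_sqrt h4.le]
        have hfx : f x ^ 2 = t ^ 2 := by
          rw [h3, hf, hg] at hsq
          have hx2 : 0 < x - s₂ := by linarith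
          field_simp at hsq
          have hne1 : x - s₁ ≠ 0 := ne_of_gt hx1
          have h7 : (1:ℝ) * (x - s₂) = (t ^ 2 * (x - s₁) ^ 2) * (x - s₂) := by
            linear_combination (x - s₂) * hsq
          have h8 := mul_right_cancel₀ (ne_of_gt hx2) h7
          rw [hf]
          field_simp
          linear_combination h8
        have hfabs : f x = |t| := by
          have := congrArg Real.sqrt hfx
          rwa [Real.sqrt_sq h1.le, Real.sqrt_sq_eq_abs] at this
        have : x - s₁ = |t|⁻¹ := by
          rw [hf] at hfabs
          rw [← hfabs, inv_inv]
        linarith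
      exact hnd _ (eq_dirac_of_ae_eq hdir)
    have hcs' : m₂ ^ 2 < J * (1 - δ * m₂) := lt_of_le_of_ne hcs hne
    nlinarith [mul_lt_mul_of_pos_left hcs' hδ]

/-- **The R-transform is an increasing function.** With `m` the Stieltjes transform of `μ`
(injective on `(-∞, A)`) and `minv` its inverse on the image, the R-transform
`R(w) = m⁻¹(-w) - 1/w` is monotone increasing on its domain
`{w : -w ∈ m((-∞, A))}`; if moreover `μ` is not a single mass point, `R` is strictly
increasing there. -/
theorem r_transform_increasing (A : ℝ) (μ : Measure ℝ) [IsProbabilityMeasure μ]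
    (hsupp : μ (Set.Iio A) = 0)
    (m : ℝ → ℝ) (hm : ∀ s, m s = ∫ x, (x - s)⁻¹ ∂μ)
    (minv : ℝ → ℝ) (hminv : ∀ s < A, minv (m s) = s)
    (R : ℝ → ℝ) (hR : ∀ w, R w = minv (-w) - 1 / w)
    (D : Set ℝ) (hD : D = {w : ℝ | -w ∈ m '' Set.Iio A}) :
    MonotoneOn R D ∧
      ((∀ x₀ : ℝ, μ ≠ MeasureTheory.Measure.dirac x₀) → StrictMonoOn R D) := by
  subst hD
  have step : ∀ w₁ ∈ {w : ℝ | -w ∈ m '' Set.Iio A}, ∀ w₂ ∈ {w : ℝ | -w ∈ m '' Set.Iio A},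
      w₁ < w₂ → (R w₁ ≤ R w₂ ∧ ((∀ x₀ : ℝ, μ ≠ Measure.dirac x₀) → R w₁ < R w₂)) := by
    intro w₁ hw₁ w₂ hw₂ hlt
    obtain ⟨s₁, hs₁A, hms₁⟩ := hw₁
    obtain ⟨s₂, hs₂A, hms₂⟩ := hw₂
    simp only [Set.mem_Iio] at hs₁A hs₂A
    have hm₁pos : 0 < m s₁ := by rw [hm]; exact m_pos hsupp hs₁A
    have hm₂pos : 0 < m s₂ := by rw [hm]; exact m_pos hsupp hs₂A
    have hmlt : m s₂ < m s₁ := by rw [hms₁, hms₂]; linarith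
    have hs : s₂ < s₁ := by
      by_contra h
      push_neg at h
      have := m_mono hsupp h hs₂A
      rw [← hm s₁, ← hm s₂] at this
      linarith
    have hk := key_ineq A μ hsupp hs hs₁A
    rw [← hm s₁, ← hm s₂] at hk
    obtain ⟨hk1, hk2⟩ := hk
    have hw₁eq : w₁ = -(m s₁) := by rw [hms₁]; ring
    have hw₂eq : w₂ = -(m s₂) := by rw [hms₂]; ring
    have hRw₁ : R w₁ = s₁ + 1 / m s₁ := by
      rw [hR w₁, ← hms₁, hminv s₁ hs₁A, hw₁eq, div_neg]
      ring
    have hRw₂ : R w₂ = s₂ + 1 / m s₂ := by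
      rw [hR w₂, ← hms₂, hminv s₂ hs₂A, hw₂eq, div_neg]
      ring
    have hdiv : 1 / m s₂ - 1 / m s₁ = (m s₁ - m s₂) / (m s₁ * m s₂) := by
      rw [div_sub_div 1 1 (ne_of_gt hm₂pos) (ne_of_gt hm₁pos), one_mul, mul_one,
        mul_comm (m s₂) (m s₁)]
    constructor
    · have : s₁ - s₂ ≤ 1 / m s₂ - 1 / m s₁ := by
        rw [hdiv, le_div_iff₀ (mul_pos hm₁pos hm₂pos)]
        exact hk1
      rw [hRw₁, hRw₂]; linarith
    · intro hnd
      have : s₁ - s₂ < 1 / m s₂ - 1 / m s₁ := by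
        rw [hdiv, lt_div_iff₀ (mul_pos hm₁pos hm₂pos)]
        exact hk2 hnd
      rw [hRw₁, hRw₂]; linarith
  constructor
  · intro w₁ hw₁ w₂ hw₂ hle
    rcases eq_or_lt_of_le hle with h | h
    · rw [h]
    · exact (step w₁ hw₁ w₂ hw₂ h).1
  · intro hnd w₁ hw₁ w₂ hw₂ hlt
    exact (step w₁ hw₁ w₂ hw₂ hlt).2 hnd
end

section
/- Eigenvalue structure of the 1RSB overlap matrix: for all real numbers q, p, c, the characteristic polynomial of the n × n matrix Q = q·J + p·D + c·I equals (X − (k·m·q + m·p + c)) · (X − (m·p + c))^{k−1} · (X − c)^{k·m − k}. Equivalently, Q has eigenvalue k·m·q + m·p + c with multiplicity 1, eigenvalue m·p + c with multiplicity k − 1, and eigenvalue c with multiplicity k·m − k. -/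
open Matrix Polynomial Finset

section Aux

variable {n : Type*} [Fintype n] [DecidableEq n]

lemma my_charpoly_diagonal (d : n → ℝ) :
    (Matrix.diagonal d).charpoly = ∏ i, (X - C (d i)) := by
  have h : charmatrix (Matrix.diagonal d) = Matrix.diagonal fun i => (X : ℝ[X]) - C (d i) := by
    ext i j
    by_cases hij : i = j
    · subst hij; simp [charmatrix_apply_eq]
    · rw [charmatrix_apply_ne _ _ _ hij]
      simp [Matrix.diagonal_apply_ne _ hij]
  rw [Matrix.charpoly, h, Matrix.det_diagonal]

lemma my_charpoly_conj (P P' M : Matrix n n ℝ) (h : P * P' = 1) :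
    (P' * M * P).charpoly = M.charpoly := by
  have h' : P' * P = 1 := mul_eq_one_comm.mp h
  have key : charmatrix (P' * M * P) = (P'.map C) * charmatrix M * (P.map C) := by
    rw [charmatrix, charmatrix]
    have hmap : ∀ A B : Matrix n n ℝ, (A * B).map (C : ℝ →+* ℝ[X]) = A.map C * B.map C := by
      intro A B; exact (Matrix.map_mul ..)
    have hs : (Matrix.scalar n) (X : ℝ[X]) = (X : ℝ[X]) • (1 : Matrix n n ℝ[X]) := by
      ext i j; by_cases hij : i = j <;> simp [Matrix.scalar_apply, Matrix.one_apply, hij]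
    rw [Matrix.mul_sub, Matrix.sub_mul]
    congr 1
    · rw [hs, Matrix.mul_smul, mul_one, Matrix.smul_mul, ← hmap, h',
        Matrix.map_one _ (map_zero _) (map_one _)]
    · rw [RingHom.mapMatrix_apply, RingHom.mapMatrix_apply, hmap, hmap]
  rw [Matrix.charpoly, key, Matrix.det_mul, Matrix.det_mul, Matrix.charpoly,
    mul_comm ((P'.map C).det), mul_assoc, ← Matrix.det_mul, ← Matrix.map_mul, h',
    Matrix.map_one _ (map_zero _) (map_one _), Matrix.det_one, mul_one]

end Aux

/-- The `n × n` change-of-basis matrix: column `0` is all ones, column `b ≠ 0` is `e₀ - e_b`. -/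
def Fm (n : ℕ) : Matrix (Fin n) (Fin n) ℝ :=
  fun a b => if b.val = 0 then 1 else if a.val = 0 then 1 else if a = b then -1 else 0

/-- The inverse of `Fm n`. -/
noncomputable def Gm (n : ℕ) : Matrix (Fin n) (Fin n) ℝ :=
  fun b a => (n : ℝ)⁻¹ - if b = a ∧ a.val ≠ 0 then 1 else 0

lemma Fm_apply_zero (n : ℕ) (a b : Fin n) (hb : b.val = 0) : Fm n a b = 1 := by
  simp [Fm, hb]

lemma Fm_col_sum (n : ℕ) (b : Fin n) :
    ∑ a, Fm n a b = if b.val = 0 then (n : ℝ) else 0 := by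
  have hn : 0 < n := b.pos
  set z : Fin n := ⟨0, hn⟩ with hzdef
  by_cases hb : b.val = 0
  · simp only [hb, if_true]
    rw [Finset.sum_congr rfl (fun a _ => Fm_apply_zero n a b hb)]
    simp
  · simp only [hb, if_false]
    have hterm : ∀ a : Fin n, Fm n a b = (if a = z then (1:ℝ) else 0) + (if a = b then -1 else 0) := by
      intro a
      by_cases ha : a.val = 0
      · have haz : a = z := Fin.ext (by simp [hzdef, ha])
        have hab : a ≠ b := fun h => hb (h ▸ ha)
        have hzb : ¬ z = b := fun h => hab (haz.trans h)
        simp [Fm, hb, ha, haz, hab, hzb, show (z : ℕ) = 0 from rfl]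
      · have haz : a ≠ z := fun h => ha (by rw [h])
        simp [Fm, hb, ha, haz]
    rw [Finset.sum_congr rfl (fun a _ => hterm a), Finset.sum_add_distrib,
      Finset.sum_ite_eq' Finset.univ z (fun _ => (1:ℝ)),
      Finset.sum_ite_eq' Finset.univ b (fun _ => (-1:ℝ))]
    simp

lemma Fm_row_sum (n : ℕ) (a : Fin n) :
    ∑ b, Fm n a b = if a.val = 0 then (n : ℝ) else 0 := by
  have hn : 0 < n := a.pos
  set z : Fin n := ⟨0, hn⟩ with hzdef
  by_cases ha : a.val = 0
  · simp only [ha, if_true]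
    have : ∀ b : Fin n, Fm n a b = 1 := by
      intro b; unfold Fm; split_ifs <;> simp_all
    rw [Finset.sum_congr rfl (fun b _ => this b)]
    simp
  · simp only [ha, if_false]
    have hterm : ∀ b : Fin n, Fm n a b = (if b = z then (1:ℝ) else 0) + (if b = a then -1 else 0) := by
      intro b
      by_cases hb : b.val = 0
      · have hbz : b = z := Fin.ext (by simp [hzdef, hb])
        have hba : b ≠ a := fun h => ha (h ▸ hb)
        have hza : ¬ z = a := fun h => hba (hbz.trans h)
        simp [Fm, hb, hbz, hba, hza, show (z : ℕ) = 0 from rfl]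
      · have hbz : b ≠ z := fun h => hb (by rw [h])
        simp [Fm, hb, ha, hbz, eq_comm]
    rw [Finset.sum_congr rfl (fun b _ => hterm b), Finset.sum_add_distrib,
      Finset.sum_ite_eq' Finset.univ z (fun _ => (1:ℝ)),
      Finset.sum_ite_eq' Finset.univ a (fun _ => (-1:ℝ))]
    simp

lemma Fm_mul_Gm (n : ℕ) (hn : 0 < n) : Fm n * Gm n = 1 := by
  ext a c
  rw [Matrix.mul_apply]
  have expand : ∀ b, Fm n a b * Gm n b c =
      Fm n a b * (n:ℝ)⁻¹ - Fm n a b * (if b = c ∧ c.val ≠ 0 then 1 else 0) := by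
    intro b; unfold Gm; ring_nf
  rw [Finset.sum_congr rfl (fun b _ => expand b), Finset.sum_sub_distrib,
    ← Finset.sum_mul, Fm_row_sum]
  have hsecond : ∑ b, Fm n a b * (if b = c ∧ c.val ≠ 0 then 1 else 0) =
      if c.val ≠ 0 then Fm n a c else 0 := by
    by_cases hc : c.val = 0
    · simp [hc]
    · simp only [hc, ne_eq, not_false_iff, and_true, if_true]
      rw [Finset.sum_congr rfl (fun b _ => by rw [mul_ite, mul_one, mul_zero]),
        Finset.sum_ite_eq' Finset.univ c (fun b => Fm n a b)]
      simp
  rw [hsecond, Matrix.one_apply]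
  have hnR : (n:ℝ) ≠ 0 := Nat.cast_ne_zero.mpr hn.ne'
  by_cases hc : c.val = 0
  · simp only [hc, ne_eq, not_true_eq_false, if_false]
    by_cases ha : a.val = 0
    · have : a = c := Fin.ext (by omega)
      simp [ha, hc, this, hnR]
    · have : a ≠ c := fun h => ha (h ▸ hc)
      simp [ha, this]
  · simp only [hc, ne_eq, not_false_iff, if_true]
    by_cases ha : a.val = 0
    · have : a ≠ c := fun h => hc (h ▸ ha)
      simp [ha, this, Fm, hc, mul_inv_cancel₀ hnR]
    · by_cases hac : a = c
      · subst hac; simp [ha, Fm, hc]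
      · simp [ha, hac, Fm, hc]

/-- **Eigenvalue structure of the 1RSB overlap matrix.** For the `(k·m) × (k·m)` matrix
`Q = q·J + p·D + c·I` (with `J` the all-ones matrix and `D` the block-diagonal matrix of
`k` all-ones `m × m` blocks), the characteristic polynomial is
`(X - (k m q + m p + c)) (X - (m p + c))^(k-1) (X - c)^(k m - k)`. -/
theorem charpoly_oneRSB_overlap (k m : ℕ) (hk : 0 < k) (hm : 0 < m)
    (J D : Matrix (Fin k × Fin m) (Fin k × Fin m) ℝ)
    (hJ : ∀ x y, J x y = 1)
    (hD : ∀ x y, D x y = if x.1 = y.1 then 1 else 0)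
    (q p c : ℝ) :
    (q • J + p • D + c • (1 : Matrix (Fin k × Fin m) (Fin k × Fin m) ℝ)).charpoly =
      (X - C ((k : ℝ) * m * q + m * p + c)) *
        (X - C ((m : ℝ) * p + c)) ^ (k - 1) *
        (X - C c) ^ (k * m - k) := by
  set Q : Matrix (Fin k × Fin m) (Fin k × Fin m) ℝ := q • J + p • D + c • 1 with hQdef
  set P : Matrix (Fin k × Fin m) (Fin k × Fin m) ℝ :=
    fun x y => Fm k x.1 y.1 * Fm m x.2 y.2 with hPdef
  set P' : Matrix (Fin k × Fin m) (Fin k × Fin m) ℝ :=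
    fun x y => Gm k x.1 y.1 * Gm m x.2 y.2 with hP'def
  set d : Fin k × Fin m → ℝ := fun x =>
    if x.2.val = 0 then (if x.1.val = 0 then (k:ℝ) * m * q + m * p + c else (m:ℝ) * p + c)
    else c with hddef
  have hQ : ∀ x y, Q x y = q + (if x.1 = y.1 then p else 0) + (if x = y then c else 0) := by
    intro x y
    simp only [hQdef, Matrix.add_apply, Matrix.smul_apply, smul_eq_mul, hJ, hD,
      Matrix.one_apply]
    split_ifs <;> ring
  have hPP' : P * P' = 1 := by
    ext x y
    rw [Matrix.mul_apply, Fintype.sum_prod_type]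
    have : ∀ l e, P x (l, e) * P' (l, e) y =
        (Fm k x.1 l * Gm k l y.1) * (Fm m x.2 e * Gm m e y.2) := by
      intro l e; simp only [hPdef, hP'def]; ring
    simp_rw [this, ← Finset.mul_sum, ← Finset.sum_mul]
    rw [← Matrix.mul_apply, ← Matrix.mul_apply, Fm_mul_Gm k hk, Fm_mul_Gm m hm,
      Matrix.one_apply, Matrix.one_apply, Matrix.one_apply]
    by_cases h1 : x.1 = y.1 <;> by_cases h2 : x.2 = y.2 <;>
      simp [Prod.ext_iff, h1, h2]
  have hQP : Q * P = P * Matrix.diagonal d := by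
    ext x y
    rw [Matrix.mul_apply, Matrix.mul_diagonal]
    have hterm : ∀ z : Fin k × Fin m, Q x z * P z y =
        q * (Fm k z.1 y.1 * Fm m z.2 y.2)
        + (if x.1 = z.1 then p * (Fm k z.1 y.1 * Fm m z.2 y.2) else 0)
        + (if x = z then c * (Fm k z.1 y.1 * Fm m z.2 y.2) else 0) := by
      intro z
      rw [hQ, hPdef]
      split_ifs <;> ring
    rw [Finset.sum_congr rfl (fun z _ => hterm z), Finset.sum_add_distrib,
      Finset.sum_add_distrib]
    have hS1 : ∑ z : Fin k × Fin m, q * (Fm k z.1 y.1 * Fm m z.2 y.2) =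
        q * ((if y.1.val = 0 then (k:ℝ) else 0) * (if y.2.val = 0 then (m:ℝ) else 0)) := by
      rw [← Finset.mul_sum, Fintype.sum_prod_type]
      simp_rw [← Finset.mul_sum]
      rw [← Finset.sum_mul, Fm_col_sum, Fm_col_sum]
    have hS2 : ∑ z : Fin k × Fin m, (if x.1 = z.1 then p * (Fm k z.1 y.1 * Fm m z.2 y.2) else 0) =
        p * (Fm k x.1 y.1 * (if y.2.val = 0 then (m:ℝ) else 0)) := by
      rw [Fintype.sum_prod_type]
      have hinner : ∀ l, (∑ e, if x.1 = l then p * (Fm k l y.1 * Fm m e y.2) else 0) =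
          if x.1 = l then ∑ e, p * (Fm k l y.1 * Fm m e y.2) else 0 := by
        intro l; by_cases h : x.1 = l <;> simp [h]
      rw [Finset.sum_congr rfl fun l _ => hinner l,
        Finset.sum_ite_eq Finset.univ x.1 (fun l => ∑ e, p * (Fm k l y.1 * Fm m e y.2)),
        if_pos (Finset.mem_univ x.1)]
      simp_rw [← Finset.mul_sum]
      rw [Fm_col_sum]
    have hS3 : ∑ z : Fin k × Fin m, (if x = z then c * (Fm k z.1 y.1 * Fm m z.2 y.2) else 0) =
        c * (Fm k x.1 y.1 * Fm m x.2 y.2) := by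
      rw [Finset.sum_ite_eq Finset.univ x (fun z => c * (Fm k z.1 y.1 * Fm m z.2 y.2))]
      simp
    rw [hS1, hS2, hS3]
    simp only [hPdef, hddef]
    by_cases hb : y.2.val = 0
    · rw [Fm_apply_zero m x.2 y.2 hb]
      by_cases hj : y.1.val = 0
      · rw [Fm_apply_zero k x.1 y.1 hj]
        simp only [hb, hj, if_true]
        ring
      · simp only [hb, hj, if_true, if_false]
        ring
    · simp only [hb, if_false]
      ring
  have hP'P : P' * P = 1 := mul_eq_one_comm.mp hPP'
  have hdiag : P' * Q * P = Matrix.diagonal d := by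
    rw [mul_assoc, hQP, ← mul_assoc, hP'P, one_mul]
  have hconj := my_charpoly_conj P P' Q hPP'
  rw [hdiag] at hconj
  rw [← hconj, my_charpoly_diagonal, Fintype.prod_prod_type]
  simp only [hddef]
  have hzm : (⟨0, hm⟩ : Fin m) ∈ Finset.univ := Finset.mem_univ _
  have hzk : (⟨0, hk⟩ : Fin k) ∈ Finset.univ := Finset.mem_univ _
  have hinner : ∀ i : Fin k,
      (∏ a : Fin m, (X - C (if (a : ℕ) = 0 then
          (if (i : ℕ) = 0 then (k:ℝ) * m * q + m * p + c else (m:ℝ) * p + c) else c))) =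
      (X - C (if (i : ℕ) = 0 then (k:ℝ) * m * q + m * p + c else (m:ℝ) * p + c)) *
        (X - C c) ^ (m - 1) := by
    intro i
    rw [← Finset.mul_prod_erase Finset.univ _ hzm]
    have hrest : ∀ a ∈ Finset.univ.erase (⟨0, hm⟩ : Fin m),
        (X - C (if (a : ℕ) = 0 then
          (if (i : ℕ) = 0 then (k:ℝ) * m * q + m * p + c else (m:ℝ) * p + c) else c)) =
        X - C c := by
      intro a ha
      have h0 : (a : ℕ) ≠ 0 := fun h => (Finset.mem_erase.mp ha).1 (Fin.ext h)
      simp [h0]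
    rw [Finset.prod_congr rfl hrest, Finset.prod_const, Finset.card_erase_of_mem hzm,
      Finset.card_univ, Fintype.card_fin]
    norm_num
  rw [Finset.prod_congr rfl (fun i _ => hinner i), Finset.prod_mul_distrib,
    Finset.prod_const, Finset.card_univ, Fintype.card_fin]
  have houter : (∏ i : Fin k,
      (X - C (if (i : ℕ) = 0 then (k:ℝ) * m * q + m * p + c else (m:ℝ) * p + c))) =
      (X - C ((k:ℝ) * m * q + m * p + c)) * (X - C ((m:ℝ) * p + c)) ^ (k - 1) := by
    rw [← Finset.mul_prod_erase Finset.univ _ hzk]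
    have hrest : ∀ i ∈ Finset.univ.erase (⟨0, hk⟩ : Fin k),
        (X - C (if (i : ℕ) = 0 then (k:ℝ) * m * q + m * p + c else (m:ℝ) * p + c)) =
        X - C ((m:ℝ) * p + c) := by
      intro i hi
      have h0 : (i : ℕ) ≠ 0 := fun h => (Finset.mem_erase.mp hi).1 (Fin.ext h)
      simp [h0]
    rw [Finset.prod_congr rfl hrest, Finset.prod_const, Finset.card_erase_of_mem hzk,
      Finset.card_univ, Fintype.card_fin]
    simp
  rw [houter, ← pow_mul]
  have hexp : (m - 1) * k = k * m - k := by rw [Nat.sub_mul, one_mul, Nat.mul_comm]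
  rw [hexp]
end

section
/- Diagonal of the LQ factor via inverse Gram matrices: for every k ∈ {0, 1, …, K−1}, let H_k denote the (k+1) × N matrix consisting of the first k+1 rows of H. Then the Gram matrix M_k = H_k · H_kᴴ is invertible, and the bottom-right entry of its inverse satisfies (M_k⁻¹)_{k,k} = |L_{k,k}|⁻²; equivalently, |L_{k,k}|² = 1 / [(H_k H_kᴴ)⁻¹]_{k,k}. -/
open Matrix

/-- **Diagonal of the LQ factor via inverse Gram matrices.** If `H = L·Q̄` with `L`
lower triangular with nonzero diagonal and `Q̄` having orthonormal rows, then for each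
`k` the Gram matrix `Hₖ Hₖᴴ` of the first `k+1` rows of `H` is invertible and the
bottom-right entry of its inverse equals `|L_{k,k}|⁻²`. -/
theorem lq_diag_via_inverse_gram (K N : ℕ) (hK : 0 < K) (hN : 0 < N)
    (H : Matrix (Fin K) (Fin N) ℂ) (L : Matrix (Fin K) (Fin K) ℂ)
    (Qb : Matrix (Fin K) (Fin N) ℂ)
    (hL : ∀ i j : Fin K, i < j → L i j = 0)
    (hLdiag : ∀ i : Fin K, L i i ≠ 0)
    (hQ : Qb * Qb.conjTranspose = 1)
    (hH : H = L * Qb) (k : Fin K)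
    (Hk : Matrix (Fin (k.1 + 1)) (Fin N) ℂ)
    (hHk : ∀ (i : Fin (k.1 + 1)) (j : Fin N), Hk i j = H (Fin.castLE k.2 i) j) :
    IsUnit (Hk * Hk.conjTranspose) ∧
      (Hk * Hk.conjTranspose)⁻¹ (Fin.last k.1) (Fin.last k.1) =
        ((‖L k k‖ ^ 2)⁻¹ : ℝ) := by
  have hkK : k.1 + 1 ≤ K := k.2
  set Lk : Matrix (Fin (k.1 + 1)) (Fin (k.1 + 1)) ℂ :=
    fun i j => L (Fin.castLE hkK i) (Fin.castLE hkK j) with hLkdef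
  set Qk : Matrix (Fin (k.1 + 1)) (Fin N) ℂ :=
    fun i j => Qb (Fin.castLE hkK i) j with hQkdef
  -- Hk = Lk * Qk
  have hHkeq : Hk = Lk * Qk := by
    ext i j
    rw [hHk, hH, mul_apply, mul_apply]
    have hmap : ∑ m : Fin (k.1 + 1), Lk i m * Qk m j
        = ∑ m ∈ Finset.univ.map (Fin.castLEEmb hkK),
            L (Fin.castLE hkK i) m * Qb m j := by
      rw [Finset.sum_map]; rfl
    rw [hmap]
    symm
    apply Finset.sum_subset (Finset.subset_univ _)
    intro m _ hm
    have hmk : ¬ m.1 < k.1 + 1 := by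
      intro hlt
      exact hm (by simp [Fin.castLEEmb]; exact ⟨⟨m.1, hlt⟩, rfl⟩)
    have : Fin.castLE hkK i < m := by
      have : i.1 ≤ k.1 := Nat.lt_succ_iff.mp i.2
      exact Fin.lt_def.mpr (lt_of_le_of_lt this (Nat.lt_of_succ_le (Nat.not_lt.mp hmk)))
    rw [hL _ _ this, zero_mul]
  -- Qk has orthonormal rows
  have hQk : Qk * Qk.conjTranspose = 1 := by
    ext i j
    have h := congrFun (congrFun hQ (Fin.castLE hkK i)) (Fin.castLE hkK j)
    simp only [mul_apply, conjTranspose_apply, hQkdef] at h ⊢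
    show ∑ m, Qb (Fin.castLE hkK i) m * star (Qb (Fin.castLE hkK j) m) = _
    rw [h, one_apply, one_apply]
    by_cases hij : i = j
    · simp [hij]
    · rw [if_neg hij, if_neg (fun hc => hij (Fin.castLE_injective hkK hc))]
  have hGram : Hk * Hk.conjTranspose = Lk * Lk.conjTranspose := by
    rw [hHkeq, conjTranspose_mul, Matrix.mul_assoc, ← Matrix.mul_assoc Qk, hQk, Matrix.one_mul]
  -- Lk is lower triangular
  have hLkTri : Lk.BlockTriangular OrderDual.toDual := by
    intro i j hij
    have : i < j := hij
    exact hL _ _ (by exact Fin.lt_def.mpr this)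
  have hLkdet : IsUnit Lk.det := by
    rw [det_of_lowerTriangular Lk hLkTri]
    exact IsUnit.mk0 _ (Finset.prod_ne_zero_iff.mpr fun i _ => hLdiag _)
  have hLkUnit : IsUnit Lk := (Matrix.isUnit_iff_isUnit_det Lk).mpr hLkdet
  haveI : Invertible Lk := Lk.invertibleOfIsUnitDet hLkdet
  have hLkHUnit : IsUnit Lk.conjTranspose := by
    rw [Matrix.isUnit_iff_isUnit_det, det_conjTranspose]
    exact hLkdet.star
  constructor
  · rw [hGram]; exact hLkUnit.mul hLkHUnit
  · -- inverse of Lk is lower triangular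
    have hinvTri : (Lk⁻¹).BlockTriangular OrderDual.toDual :=
      blockTriangular_inv_of_blockTriangular hLkTri
    have hinvzero : ∀ m : Fin (k.1 + 1), m ≠ Fin.last k.1 → Lk⁻¹ m (Fin.last k.1) = 0 := by
      intro m hm
      exact hinvTri (show m < Fin.last k.1 from lt_of_le_of_ne (Fin.le_last m) hm)
    have hc : Lk (Fin.last k.1) (Fin.last k.1) = L k k := by
      congr 1 <;> exact Fin.ext (by simp)
    have hdiaginv : Lk⁻¹ (Fin.last k.1) (Fin.last k.1) = (L k k)⁻¹ := by
      have h1 : (Lk * Lk⁻¹) (Fin.last k.1) (Fin.last k.1) = 1 := by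
        rw [Matrix.mul_nonsing_inv Lk hLkdet]
        simp [Matrix.one_apply]
      rw [mul_apply] at h1
      rw [Finset.sum_eq_single (Fin.last k.1)
        (fun m _ hm => by rw [hinvzero m hm, mul_zero])
        (fun h => absurd (Finset.mem_univ _) h)] at h1
      rw [hc] at h1
      rw [mul_comm] at h1
      exact eq_inv_of_mul_eq_one_left h1
    rw [hGram, Matrix.mul_inv_rev, ← Matrix.conjTranspose_nonsing_inv, mul_apply]
    rw [Finset.sum_eq_single (Fin.last k.1)
      (fun m _ hm => by rw [hinvzero m hm, mul_zero])
      (fun h => absurd (Finset.mem_univ _) h)]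
    rw [conjTranspose_apply, hdiaginv]
    rw [show star (L k k)⁻¹ = (starRingEnd ℂ) (L k k)⁻¹ from rfl, map_inv₀, ← mul_inv,
      Complex.sq_norm, Complex.ofReal_inv, ← Complex.normSq_eq_conj_mul_self]
end

section
/- Closed form of the zero-temperature entropy for the Marchenko–Pastur R-transform: for every α with 0 < α < 1 and every χ > 0, χ·R(−χ) − ∫₀^χ R(−w) dw = (1 − α − √((1−α)² + 4αχ))/(2α) + ((1−α)/α)·log( (1 − α + √((1−α)² + 4αχ)) / (2(1−α)) ), where for w > 0 we set R(−w) = (α − 1 + √((1−α)² + 4αw)) / (2αw) (which extends continuously to w = 0 with value 1/(1−α), so the integral is a convergent improper Riemann/Lebesgue integral over (0, χ)). -/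
open Real MeasureTheory

/-- **Closed form of the zero-temperature entropy for the Marchenko–Pastur R-transform.**
For `0 < α < 1` and `χ > 0`, with `R(-w) = (α - 1 + √((1-α)² + 4αw))/(2αw)`,
`χ R(-χ) - ∫₀^χ R(-w) dw` equals
`(1 - α - √((1-α)² + 4αχ))/(2α) + ((1-α)/α) log((1 - α + √((1-α)² + 4αχ))/(2(1-α)))`. -/
theorem zero_temperature_entropy_closed_form (α χ : ℝ)
    (hα0 : 0 < α) (hα1 : α < 1) (hχ : 0 < χ) :
    χ * ((α - 1 + Real.sqrt ((1 - α) ^ 2 + 4 * α * χ)) / (2 * α * χ)) -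
        ∫ w in Set.Ioo (0 : ℝ) χ,
          (α - 1 + Real.sqrt ((1 - α) ^ 2 + 4 * α * w)) / (2 * α * w) =
      (1 - α - Real.sqrt ((1 - α) ^ 2 + 4 * α * χ)) / (2 * α) +
        ((1 - α) / α) *
          Real.log ((1 - α + Real.sqrt ((1 - α) ^ 2 + 4 * α * χ)) / (2 * (1 - α))) := by
  have hb : (0:ℝ) < 1 - α := by linarith
  set b := 1 - α with hb_def
  have hg : ∀ w : ℝ, 0 ≤ w → 0 < b ^ 2 + 4 * α * w := by
    intro w hw; positivity
  set s := fun w : ℝ => Real.sqrt (b ^ 2 + 4 * α * w) with hs_def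
  have hspos : ∀ w : ℝ, 0 ≤ w → 0 < s w := by
    intro w hw; exact Real.sqrt_pos.2 (hg w hw)
  have hsb : ∀ w : ℝ, 0 ≤ w → 0 < s w + b := by
    intro w hw; have := hspos w hw; linarith
  -- pointwise rewrite of integrand
  have hpt : ∀ w : ℝ, 0 < w →
      (α - 1 + s w) / (2 * α * w) = 2 / (s w + b) := by
    intro w hw
    have hsq : s w ^ 2 = b ^ 2 + 4 * α * w := Real.sq_sqrt (hg w hw.le).le
    have h1 := hsb w hw.le
    have h2 : 2 * α * w ≠ 0 := by positivity
    field_simp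
    nlinarith [hsq]
  set F := fun w : ℝ => (s w - b * Real.log (s w + b)) / α with hF_def
  have hderiv : ∀ w ∈ Set.uIcc (0:ℝ) χ, HasDerivAt F (2 / (s w + b)) w := by
    intro w hw
    rw [Set.uIcc_of_le hχ.le] at hw
    have hw0 : 0 ≤ w := hw.1
    have hgw := hg w hw0
    have hsw := hspos w hw0
    have hsbw := hsb w hw0
    have h1 : HasDerivAt (fun w : ℝ => b ^ 2 + 4 * α * w) (4 * α) w := by
      simpa using ((hasDerivAt_id w).const_mul (4 * α)).const_add (b ^ 2)
    have h2 : HasDerivAt s (4 * α / (2 * s w)) w := h1.sqrt hgw.ne'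
    have h3 : HasDerivAt (fun w => Real.log (s w + b))
        ((4 * α / (2 * s w)) / (s w + b)) w := by
      have := (h2.add_const b).log hsbw.ne'
      simpa using this
    have h4 : HasDerivAt F
        ((4 * α / (2 * s w) - b * ((4 * α / (2 * s w)) / (s w + b))) / α) w :=
      (h2.sub (h3.const_mul b)).div_const α
    convert h4 using 1
    have hsq : s w ^ 2 = b ^ 2 + 4 * α * w := Real.sq_sqrt hgw.le
    field_simp
    ring
  have hcont : ContinuousOn (fun w => 2 / (s w + b)) (Set.uIcc (0:ℝ) χ) := by
    apply ContinuousOn.div continuousOn_const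
    · exact ((Real.continuous_sqrt.comp (by continuity)).continuousOn).add continuousOn_const
    · intro w hw
      rw [Set.uIcc_of_le hχ.le] at hw
      exact (hsb w hw.1).ne'
  have hint : IntervalIntegrable (fun w => 2 / (s w + b)) volume 0 χ :=
    hcont.intervalIntegrable
  have hFTC : ∫ w in (0:ℝ)..χ, 2 / (s w + b) = F χ - F 0 :=
    intervalIntegral.integral_eq_sub_of_hasDerivAt hderiv hint
  have hIoo : (∫ w in Set.Ioo (0 : ℝ) χ,
      (α - 1 + s w) / (2 * α * w)) = F χ - F 0 := by
    rw [← hFTC, intervalIntegral.integral_of_le hχ.le,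
      MeasureTheory.integral_Ioc_eq_integral_Ioo]
    exact setIntegral_congr_fun measurableSet_Ioo (fun w hw => hpt w hw.1)
  rw [hIoo]
  have hs0 : s 0 = b := by
    simp only [hs_def, mul_zero, add_zero]
    exact Real.sqrt_sq hb.le
  have hsχ := hspos χ hχ.le
  have hlog : Real.log ((b + s χ) / (2 * b)) =
      Real.log (s χ + b) - Real.log (2 * b) := by
    rw [Real.log_div (by linarith) (by positivity), add_comm]
  simp only [hF_def, hs0]
  rw [hlog]
  have h2b : b + b = 2 * b := by ring
  rw [h2b]
  field_simp
  simp only [hs_def, hb_def]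
  ring_nf
end
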